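/- If a graph G has a dominating vertex v and M(G−v) = Z(G−v), then M(G) = Z(G). -/

import Mathlib

/-- The set of real symmetric matrices whose off-diagonal zero/nonzero
pattern matches the edges of the graph `G`. -/
def SG {V : Type*} (G : SimpleGraph V) : Set (Matrix V V ℝ) :=
  {A | A.IsSymm ∧ ∀ i j : V, i ≠ j → (A i j ≠ 0 ↔ G.Adj i j)}

/-- Maximum nullity of a graph. -/
noncomputable def maxNullity {V : Type*} [Fintype V] (G : SimpleGraph V) : ℕ :=
  sSup {k | ∃ A ∈ SG G, Fintype.card V - A.rank = k}

/-- Vertices that eventually become blue starting from the blue set `B`,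
under the standard color change rule: a blue vertex with a unique white
neighbor colors that neighbor blue. -/
inductive ZFClosed {V : Type*} (G : SimpleGraph V) (B : Set V) : V → Prop
  | init {v : V} (h : v ∈ B) : ZFClosed G B v
  | force {u v : V} (hu : ZFClosed G B u) (hadj : G.Adj u v)
      (huniq : ∀ w, G.Adj u w → w ≠ v → ZFClosed G B w) : ZFClosed G B v

/-- `B` is a zero forcing set of `G`. -/
def IsZeroForcingSet {V : Type*} (G : SimpleGraph V) (B : Set V) : Prop :=
  ∀ v : V, ZFClosed G B v

/-- The zero forcing number of `G`: the minimum size of a zero forcing set. -/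
noncomputable def zfNum {V : Type*} [Fintype V] (G : SimpleGraph V) : ℕ :=
  sInf {k | ∃ B : Finset V, IsZeroForcingSet G ↑B ∧ B.card = k}

/-- The graph obtained from `G` by deleting the vertex `v`. -/
def deleteVert {V : Type*} (G : SimpleGraph V) (v : V) :
    SimpleGraph {x : V // x ≠ v} where
  Adj a b := G.Adj a.val b.val
  symm := ⟨fun _ _ h => G.adj_symm h⟩
  loopless := ⟨fun a h => G.irrefl (v := a.val) h⟩

noncomputable instance {V : Type*} [Finite V] (v : V) :
    Fintype {x : V // x ≠ v} := Fintype.ofFinite _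

set_option linter.unusedSectionVars false
set_option linter.unusedVariables false
set_option synthInstance.maxHeartbeats 1000000
set_option maxHeartbeats 1600000
open Module Matrix Finset

lemma card_sub_rank {V : Type*} [Fintype V] (A : Matrix V V ℝ) :
    Fintype.card V - A.rank = Module.finrank ℝ (LinearMap.ker A.mulVecLin) := by
  have h := LinearMap.finrank_range_add_finrank_ker A.mulVecLin
  rw [Module.finrank_fintype_fun_eq_card] at h
  have h2 : A.rank = Module.finrank ℝ (LinearMap.range A.mulVecLin) := rfl
  omega

lemma sum_split {V : Type*} [Fintype V] [DecidableEq V] (v : V) (f : V → ℝ) :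
    ∑ j, f j = f v + ∑ j : {x : V // x ≠ v}, f j.val := by
  rw [← Finset.add_sum_erase _ f (Finset.mem_univ v)]
  congr 1
  rw [Finset.sum_subtype (p := fun x => x ≠ v) _ (fun x => by simp [Finset.mem_erase])]

lemma mulVec_eq_sum {n : Type*} [Fintype n] (M : Matrix n n ℝ) (y : n → ℝ) (i : n) :
    M.mulVec y i = ∑ j, M i j * y j := by
  simp [Matrix.mulVec, dotProduct]

lemma symm_dot {n : Type*} [Fintype n] (A : Matrix n n ℝ) (hs : A.IsSymm) (y x : n → ℝ) :
    ∑ j, A.mulVec y j * x j = ∑ j, A.mulVec x j * y j := by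
  simp only [_root_.mulVec_eq_sum, Finset.sum_mul]
  rw [Finset.sum_comm]
  refine Finset.sum_congr rfl fun j _ => Finset.sum_congr rfl fun k _ => ?_
  rw [← hs.apply j k]
  ring

section Bord
variable {V : Type*} [Fintype V] [DecidableEq V] (G : SimpleGraph V) (v : V)

def bord (c : ℝ) (b : {x : V // x ≠ v} → ℝ)
    (A' : Matrix {x : V // x ≠ v} {x : V // x ≠ v} ℝ) : Matrix V V ℝ :=
  Matrix.of fun i j =>
    if hi : i = v then (if hj : j = v then c else b ⟨j, hj⟩)
    else if hj : j = v then b ⟨i, hi⟩ else A' ⟨i, hi⟩ ⟨j, hj⟩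

def extv (t : ℝ) (x : {x : V // x ≠ v} → ℝ) : V → ℝ :=
  fun i => if hi : i = v then t else x ⟨i, hi⟩

@[simp] lemma extv_v (t : ℝ) (x : {x : V // x ≠ v} → ℝ) : extv v t x v = t := by
  simp [extv]

@[simp] lemma extv_val (t : ℝ) (x : {x : V // x ≠ v} → ℝ) (i : {x : V // x ≠ v}) :
    extv v t x i.val = x i := by
  simp [extv, i.2]

lemma bord_mulVec_val (c : ℝ) (b : {x : V // x ≠ v} → ℝ)
    (A' : Matrix {x : V // x ≠ v} {x : V // x ≠ v} ℝ) (t : ℝ) (x : {x : V // x ≠ v} → ℝ)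
    (i : {x : V // x ≠ v}) :
    (bord v c b A').mulVec (extv v t x) i.val = b i * t + A'.mulVec x i := by
  rw [_root_.mulVec_eq_sum, sum_split v]
  congr 1
  · simp [bord, extv, i.2]
  · rw [_root_.mulVec_eq_sum]
    refine Finset.sum_congr rfl fun j _ => ?_
    simp [bord, extv, i.2, j.2]

lemma bord_mulVec_v (c : ℝ) (b : {x : V // x ≠ v} → ℝ)
    (A' : Matrix {x : V // x ≠ v} {x : V // x ≠ v} ℝ) (t : ℝ) (x : {x : V // x ≠ v} → ℝ) :
    (bord v c b A').mulVec (extv v t x) v = c * t + ∑ j : {x : V // x ≠ v}, b j * x j := by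
  rw [_root_.mulVec_eq_sum, sum_split v]
  congr 1
  · simp [bord, extv]
  · refine Finset.sum_congr rfl fun j _ => ?_
    simp [bord, extv, j.2]

lemma bord_mem_SG (hdom : ∀ w, w ≠ v → G.Adj v w) (c : ℝ) (b : {x : V // x ≠ v} → ℝ)
    (A' : Matrix {x : V // x ≠ v} {x : V // x ≠ v} ℝ)
    (hA' : A' ∈ SG (deleteVert G v)) (hb : ∀ i, b i ≠ 0) : bord v c b A' ∈ SG G := by
  constructor
  · ext i j
    show bord v c b A' j i = bord v c b A' i j
    by_cases hi : i = v <;> by_cases hj : j = v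
    · simp [bord, hi, hj]
    · simp [bord, hi, hj]
    · simp [bord, hi, hj]
    · simp only [bord, Matrix.of_apply, dif_neg hi, dif_neg hj]
      exact congrFun (congrFun hA'.1 ⟨i, hi⟩) ⟨j, hj⟩
  · intro i j hij
    by_cases hi : i = v
    · have hj : j ≠ v := fun h => hij (hi.trans h.symm)
      rw [show bord v c b A' i j = b ⟨j, hj⟩ by simp [bord, hi, hj]]
      exact iff_of_true (hb _) (hi ▸ hdom j hj)
    · by_cases hj : j = v
      · rw [show bord v c b A' i j = b ⟨i, hi⟩ by simp [bord, hi, hj]]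
        exact iff_of_true (hb _) (hj ▸ (hdom i hi).symm)
      · rw [show bord v c b A' i j = A' ⟨i, hi⟩ ⟨j, hj⟩ by simp [bord, hi, hj]]
        exact hA'.2 ⟨i, hi⟩ ⟨j, hj⟩ (fun hc => hij (congrArg Subtype.val hc))

end Bord

section Kernels
variable {V : Type*} [Fintype V] [DecidableEq V] (G : SimpleGraph V) (v : V)

noncomputable def extL : ({x : V // x ≠ v} → ℝ) →ₗ[ℝ] (V → ℝ) where
  toFun := extv v 0
  map_add' x y := by funext i; by_cases h : i = v <;> simp [extv, h]
  map_smul' c x := by funext i; by_cases h : i = v <;> simp [extv, h]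

lemma GL1 (hdom : ∀ w, w ≠ v → G.Adj v w)
    (A' : Matrix {x : V // x ≠ v} {x : V // x ≠ v} ℝ) (hA' : A' ∈ SG (deleteVert G v))
    (y : {x : V // x ≠ v} → ℝ) (hy : ∀ i, A'.mulVec y i ≠ 0) :
    ∃ A ∈ SG G, finrank ℝ (LinearMap.ker A'.mulVecLin) + 1
      ≤ finrank ℝ (LinearMap.ker A.mulVecLin) := by
  classical
  set b := A'.mulVec y with hb
  set c := ∑ j, b j * y j with hc
  refine ⟨bord v c b A', bord_mem_SG G v hdom c b A' hA' hy, ?_⟩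
  set D := LinearMap.ker A'.mulVecLin with hD
  let j1 : (D × ℝ) →ₗ[ℝ] ({x : V // x ≠ v} → ℝ) := D.subtype.comp (LinearMap.fst ℝ D ℝ)
  let j2 : (D × ℝ) →ₗ[ℝ] ℝ := LinearMap.snd ℝ D ℝ
  let Φ : (D × ℝ) →ₗ[ℝ] (V → ℝ) :=
    (extL v).comp (j1 + j2.smulRight (-y)) + j2.smulRight (extv v 1 0)
  have hΦapp : ∀ p : D × ℝ, Φ p = extv v p.2 ((p.1 : {x : V // x ≠ v} → ℝ) - p.2 • y) := by
    intro p
    funext i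
    by_cases h : i = v <;>
      simp [Φ, j1, j2, extL, extv, h, sub_eq_add_neg]
  have hmemker : ∀ p : D × ℝ, A'.mulVec (p.1 : {x : V // x ≠ v} → ℝ) = 0 := fun p => p.1.2
  have hmem : ∀ p : D × ℝ, Φ p ∈ LinearMap.ker (bord v c b A').mulVecLin := by
    intro p
    obtain ⟨⟨x, hx⟩, t⟩ := p
    have hx' : A'.mulVec x = 0 := hx
    rw [LinearMap.mem_ker, hΦapp]
    simp only [Matrix.mulVecLin_apply]
    funext i
    simp only [Pi.zero_apply]
    by_cases h : i = v
    · rw [h, bord_mulVec_v]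
      have h1 : ∑ j, b j * (x - t • y) j = (∑ j, b j * x j) - t * ∑ j, b j * y j := by
        simp only [Pi.sub_apply, Pi.smul_apply, smul_eq_mul, mul_sub, Finset.sum_sub_distrib,
          Finset.mul_sum]
        congr 1
        refine Finset.sum_congr rfl fun j _ => by ring
      have h2 : ∑ j, b j * x j = 0 := by
        rw [hb, symm_dot A' hA'.1 y x]
        simp [hx']
      rw [h1, h2, ← hc]
      ring
    · have := bord_mulVec_val v c b A' t (x - t • y) ⟨i, h⟩
      rw [show i = (⟨i, h⟩ : {x : V // x ≠ v}).val from rfl, this]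
      have : A'.mulVec (x - t • y) = - (t • b) := by
        rw [Matrix.mulVec_sub, hx', Matrix.mulVec_smul, ← hb]
        simp
      rw [this]
      simp only [Pi.neg_apply, Pi.smul_apply, smul_eq_mul, Pi.zero_apply]
      ring
  have hinj : Function.Injective Φ := by
    rw [← LinearMap.ker_eq_bot, Submodule.eq_bot_iff]
    rintro ⟨⟨x, hx⟩, t⟩ hp
    rw [LinearMap.mem_ker, hΦapp] at hp
    have ht : t = 0 := by
      have := congrFun hp v
      simpa using this
    subst ht
    have hx0 : x = 0 := by
      funext i
      have := congrFun hp i.val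
      simpa using this
    simp [hx0]
  let Φ' := Φ.codRestrict (LinearMap.ker (bord v c b A').mulVecLin) hmem
  have hinj' : Function.Injective Φ' := by
    intro p q hpq
    apply hinj
    exact congrArg Subtype.val hpq
  have := LinearMap.finrank_le_finrank_of_injective hinj'
  rwa [Module.finrank_prod, Module.finrank_self] at this

lemma single_mulVec {n : Type*} [Fintype n] [DecidableEq n] (A : Matrix n n ℝ)
    (u : n) (i : n) : A.mulVec (Pi.single u 1) i = A i u := by
  rw [_root_.mulVec_eq_sum]
  rw [Finset.sum_eq_single u (fun j _ hj => by simp [Pi.single_apply, hj]) (by simp)]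
  simp

lemma GL2 (hdom : ∀ w, w ≠ v → G.Adj v w)
    (A' : Matrix {x : V // x ≠ v} {x : V // x ≠ v} ℝ) (hA' : A' ∈ SG (deleteVert G v))
    (u : {x : V // x ≠ v}) (hu0 : ∀ j, A' u j = 0)
    (y : {x : V // x ≠ v} → ℝ) (hy : ∀ i, i ≠ u → A'.mulVec y i ≠ 0) :
    ∃ A ∈ SG G, finrank ℝ (LinearMap.ker A'.mulVecLin)
      ≤ finrank ℝ (LinearMap.ker A.mulVecLin) := by
  classical
  have hcol : ∀ i, A' i u = 0 := by
    intro i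
    have := congrFun (congrFun hA'.1 i) u
    rw [Matrix.transpose_apply] at this
    rw [← this, hu0]
  have hAeu : A'.mulVec (Pi.single u 1) = 0 := by
    funext i; rw [_root_.single_mulVec, hcol]; rfl
  set eu : {x : V // x ≠ v} → ℝ := Pi.single u 1 with heu
  set b : {x : V // x ≠ v} → ℝ := A'.mulVec y + eu with hbdef
  have hAyu : A'.mulVec y u = 0 := by
    rw [_root_.mulVec_eq_sum]
    exact Finset.sum_eq_zero fun j _ => by rw [hu0]; ring
  have hb : ∀ i, b i ≠ 0 := by
    intro i
    by_cases hiu : i = u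
    · subst hiu
      simp [hbdef, hAyu, heu]
    · have := hy i hiu
      simpa [hbdef, heu, Pi.single_apply, hiu] using this
  set s : ℝ := ∑ j, A'.mulVec y j * y j with hs
  set c : ℝ := s + 1 with hcdef
  set A'' : Matrix {x : V // x ≠ v} {x : V // x ≠ v} ℝ := A' + Matrix.single u u 1
    with hA''def
  have hA''offdiag : ∀ i j, i ≠ j → A'' i j = A' i j := by
    intro i j hij
    simp only [hA''def, Matrix.add_apply, Matrix.single_apply_of_ne _ _ _ _ _
      (fun h : u = i ∧ u = j => hij (h.1.symm.trans h.2))]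
    ring
  have hA''mem : A'' ∈ SG (deleteVert G v) := by
    constructor
    · ext i j
      show A'' j i = A'' i j
      by_cases hij : i = j
      · rw [hij]
      · rw [hA''offdiag _ _ (Ne.symm hij), hA''offdiag _ _ hij]
        exact congrFun (congrFun hA'.1 i) j
    · intro i j hij
      rw [hA''offdiag _ _ hij]
      exact hA'.2 i j hij
  have hA''mulVec : ∀ z, A''.mulVec z = A'.mulVec z + fun i => if i = u then z u else 0 := by
    intro z
    funext i
    simp only [hA''def, Matrix.add_mulVec, Pi.add_apply]
    congr 1
    rw [_root_.mulVec_eq_sum]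
    rw [Finset.sum_eq_single u (fun j _ hj => by
      rw [Matrix.single_apply_of_ne _ _ _ _ _
        (fun h : u = i ∧ u = j => hj h.2.symm)]; ring) (by simp)]
    by_cases hiu : i = u
    · simp [hiu, Matrix.single_apply_same]
    · simp [Matrix.single_apply_of_ne _ _ _ _ _
        (fun h : u = i ∧ u = u => hiu h.1.symm), hiu]
  refine ⟨bord v c b A'', bord_mem_SG G v hdom c b A'' hA''mem hb, ?_⟩
  set D := LinearMap.ker A'.mulVecLin with hD
  let j1 : (D × ℝ) →ₗ[ℝ] ({x : V // x ≠ v} → ℝ) := D.subtype.comp (LinearMap.fst ℝ D ℝ)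
  let j2 : (D × ℝ) →ₗ[ℝ] ℝ := LinearMap.snd ℝ D ℝ
  let η : {x : V // x ≠ v} → ℝ := -y + (y u - 1) • eu
  let inner : (D × ℝ) →ₗ[ℝ] ({x : V // x ≠ v} → ℝ) :=
    j1 - ((LinearMap.proj u).comp j1).smulRight eu + j2.smulRight η
  let Φ : (D × ℝ) →ₗ[ℝ] (V → ℝ) :=
    (extL v).comp inner + j2.smulRight (extv v 1 0)
  have hΦapp : ∀ p : D × ℝ, Φ p
      = extv v p.2 ((p.1 : {x : V // x ≠ v} → ℝ)
        - (p.1 : {x : V // x ≠ v} → ℝ) u • eu + p.2 • η) := by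
    intro p
    funext i
    by_cases h : i = v <;>
      simp [Φ, inner, j1, j2, extL, extv, h]
  have hmem : ∀ p : D × ℝ, Φ p ∈ LinearMap.ker (bord v c b A'').mulVecLin := by
    rintro ⟨⟨x, hx⟩, t⟩
    have hx' : A'.mulVec x = 0 := hx
    rw [LinearMap.mem_ker, hΦapp]
    simp only [Matrix.mulVecLin_apply]
    set z : {x : V // x ≠ v} → ℝ := x - x u • eu + t • η with hz
    have hzu : z u = -t := by
      simp [hz, η, heu, Pi.single_apply]
      ring
    have hA'z : A'.mulVec z = -(t • A'.mulVec y) := by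
      simp only [hz, Matrix.mulVec_add, Matrix.mulVec_sub, Matrix.mulVec_smul, hx', hAeu]
      have : A'.mulVec η = -(A'.mulVec y) := by
        simp only [η, Matrix.mulVec_add, Matrix.mulVec_smul, Matrix.mulVec_neg, hAeu]
        simp
      rw [this]
      funext i
      simp
    have hA''z : A''.mulVec z = -(t • b) := by
      rw [hA''mulVec, hA'z]
      funext i
      by_cases hiu : i = u
      · subst hiu
        simp [hzu, hbdef, heu, hAyu]
      · simp [hiu, hbdef, heu, Pi.single_apply, Ne.symm, hiu]
    funext i
    simp only [Pi.zero_apply]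
    by_cases h : i = v
    · rw [h, bord_mulVec_v]
      have hbz : ∑ j, b j * z j = -(t * s) - t := by
        have h1 : ∑ j, b j * z j = (∑ j, A'.mulVec y j * z j) + z u := by
          simp only [hbdef, Pi.add_apply, add_mul, Finset.sum_add_distrib]
          congr 1
          rw [Finset.sum_eq_single u (fun j _ hj => by
            simp [heu, Pi.single_apply, hj]) (by simp)]
          simp [heu]
        have h2 : ∑ j, A'.mulVec y j * z j = ∑ j, A'.mulVec z j * y j :=
          symm_dot A' hA'.1 y z
        rw [h1, h2, hA'z, hzu]
        have h3 : ∑ j, (-(t • A'.mulVec y)) j * y j = -(t * s) := by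
          rw [hs, Finset.mul_sum, ← Finset.sum_neg_distrib]
          refine Finset.sum_congr rfl fun j _ => ?_
          simp only [Pi.neg_apply, Pi.smul_apply, smul_eq_mul]
          ring
        rw [h3]
        ring
      rw [hbz, hcdef]
      ring
    · have hv := bord_mulVec_val v c b A'' t z ⟨i, h⟩
      rw [show i = (⟨i, h⟩ : {x : V // x ≠ v}).val from rfl, hv, hA''z]
      simp only [Pi.neg_apply, Pi.smul_apply, smul_eq_mul]
      ring
  -- kernel of Φ is small
  have hker : ∀ p : D × ℝ, Φ p = 0 → p.2 = 0 ∧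
      (p.1 : {x : V // x ≠ v} → ℝ) = (p.1 : {x : V // x ≠ v} → ℝ) u • eu := by
    rintro ⟨⟨x, hx⟩, t⟩ hp
    have ht : t = 0 := by
      have := congrFun ((hΦapp _).symm.trans hp) v
      simpa using this
    subst ht
    refine ⟨rfl, ?_⟩
    funext i
    have := congrFun ((hΦapp _).symm.trans hp) i.val
    simp only [extv_val, zero_smul, add_zero, Pi.sub_apply, Pi.smul_apply, smul_eq_mul,
      Pi.zero_apply] at this
    have : x i - x u * eu i = 0 := by simpa using this
    simp only [Pi.smul_apply, smul_eq_mul]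
    linarith
  let Φ' := Φ.codRestrict (LinearMap.ker (bord v c b A'').mulVecLin) hmem
  have hkerΦ' : LinearMap.ker Φ' = LinearMap.ker Φ := LinearMap.ker_codRestrict _ _ _
  have hrn := LinearMap.finrank_range_add_finrank_ker Φ'
  have hrange : finrank ℝ (LinearMap.range Φ')
      ≤ finrank ℝ (LinearMap.ker (bord v c b A'').mulVecLin) :=
    Submodule.finrank_le _
  have hsmall : finrank ℝ (LinearMap.ker Φ) ≤ 1 := by
    let κ : (LinearMap.ker Φ) →ₗ[ℝ] ℝ :=
      ((LinearMap.proj u).comp (D.subtype.comp (LinearMap.fst ℝ D ℝ))).comp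
        (LinearMap.ker Φ).subtype
    have hκinj : Function.Injective κ := by
      rintro ⟨⟨⟨x, hx⟩, t⟩, hK⟩ ⟨⟨⟨x2, hx2⟩, t2⟩, hK2⟩ hk
      obtain ⟨ht, hxeq⟩ := hker _ hK
      obtain ⟨ht2, hxeq2⟩ := hker _ hK2
      have hxeq' : x = x u • eu := hxeq
      have hxeq2' : x2 = x2 u • eu := hxeq2
      have hk' : x u = x2 u := hk
      have ht' : t = 0 := ht
      have ht2' : t2 = 0 := ht2
      apply Subtype.ext
      refine Prod.ext (Subtype.ext ?_) (ht'.trans ht2'.symm)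
      show x = x2
      rw [hxeq', hxeq2', hk']
    have := LinearMap.finrank_le_finrank_of_injective hκinj
    simpa using this
  have hprod : finrank ℝ (D × ℝ) = finrank ℝ D + 1 := by
    rw [Module.finrank_prod, Module.finrank_self]
  rw [hkerΦ'] at hrn
  omega

lemma GL3 (hdom : ∀ w, w ≠ v → G.Adj v w)
    (A' : Matrix {x : V // x ≠ v} {x : V // x ≠ v} ℝ) (hA' : A' ∈ SG (deleteVert G v))
    (u : {x : V // x ≠ v}) (hu0 : ∀ j, A' u j = 0) :
    ∃ A ∈ SG G, finrank ℝ (LinearMap.ker A'.mulVecLin)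
      ≤ finrank ℝ (LinearMap.ker A.mulVecLin) + 1 := by
  classical
  have hcol : ∀ i, A' i u = 0 := by
    intro i
    have := congrFun (congrFun hA'.1 i) u
    rw [Matrix.transpose_apply] at this
    rw [← this, hu0]
  have hAeu : A'.mulVec (Pi.single u 1) = 0 := by
    funext i; rw [_root_.single_mulVec, hcol]; rfl
  set eu : {x : V // x ≠ v} → ℝ := Pi.single u 1 with heu
  set b : {x : V // x ≠ v} → ℝ := fun _ => 1 with hbdef
  refine ⟨bord v 0 b A', bord_mem_SG G v hdom 0 b A' hA' (fun i => one_ne_zero), ?_⟩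
  set D := LinearMap.ker A'.mulVecLin with hD
  let sumL : ({x : V // x ≠ v} → ℝ) →ₗ[ℝ] ℝ := ∑ j, LinearMap.proj j
  have hsumL : ∀ x : {x : V // x ≠ v} → ℝ, sumL x = ∑ j, x j := by
    intro x
    simp [sumL, LinearMap.sum_apply, LinearMap.proj]
  let Φ : D →ₗ[ℝ] (V → ℝ) :=
    (extL v).comp (D.subtype - (sumL.comp D.subtype).smulRight eu)
  have hΦapp : ∀ p : D, Φ p
      = extv v 0 ((p : {x : V // x ≠ v} → ℝ) - (∑ j, (p : {x : V // x ≠ v} → ℝ) j) • eu) := by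
    intro p
    funext i
    by_cases h : i = v <;>
      simp [Φ, extL, extv, h, hsumL]
  have hmem : ∀ p : D, Φ p ∈ LinearMap.ker (bord v 0 b A').mulVecLin := by
    rintro ⟨x, hx⟩
    have hx' : A'.mulVec x = 0 := hx
    rw [LinearMap.mem_ker, hΦapp]
    simp only [Matrix.mulVecLin_apply]
    set σ : ℝ := ∑ j, x j with hσ
    set z : {x : V // x ≠ v} → ℝ := x - σ • eu with hz
    have hA'z : A'.mulVec z = 0 := by
      simp only [hz, Matrix.mulVec_sub, Matrix.mulVec_smul, hx', hAeu]
      funext i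
      simp
    funext i
    simp only [Pi.zero_apply]
    by_cases h : i = v
    · rw [h, bord_mulVec_v]
      have : ∑ j, b j * z j = 0 := by
        simp only [hbdef, one_mul, hz, Pi.sub_apply, Pi.smul_apply, smul_eq_mul,
          Finset.sum_sub_distrib]
        rw [← Finset.mul_sum, hσ]
        have : ∑ j, eu j = 1 := by simp [heu]
        rw [this]
        ring
      rw [this]
      ring
    · have hv := bord_mulVec_val v 0 b A' 0 z ⟨i, h⟩
      rw [show i = (⟨i, h⟩ : {x : V // x ≠ v}).val from rfl, hv, hA'z]
      simp
  have hker : ∀ p : D, Φ p = 0 →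
      (p : {x : V // x ≠ v} → ℝ) = (∑ j, (p : {x : V // x ≠ v} → ℝ) j) • eu := by
    rintro ⟨x, hx⟩ hp
    funext i
    have := congrFun ((hΦapp _).symm.trans hp) i.val
    simp only [extv_val, Pi.sub_apply, Pi.smul_apply, smul_eq_mul, Pi.zero_apply] at this
    simp only [Pi.smul_apply, smul_eq_mul]
    linarith
  let Φ' := Φ.codRestrict (LinearMap.ker (bord v 0 b A').mulVecLin) hmem
  have hkerΦ' : LinearMap.ker Φ' = LinearMap.ker Φ := LinearMap.ker_codRestrict _ _ _
  have hrn := LinearMap.finrank_range_add_finrank_ker Φ'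
  have hrange : finrank ℝ (LinearMap.range Φ')
      ≤ finrank ℝ (LinearMap.ker (bord v 0 b A').mulVecLin) :=
    Submodule.finrank_le _
  have hsmall : finrank ℝ (LinearMap.ker Φ) ≤ 1 := by
    let κ : (LinearMap.ker Φ) →ₗ[ℝ] ℝ :=
      ((LinearMap.proj u).comp D.subtype).comp (LinearMap.ker Φ).subtype
    have hκinj : Function.Injective κ := by
      rintro ⟨⟨x, hx⟩, hK⟩ ⟨⟨x2, hx2⟩, hK2⟩ hk
      have hxeq : x = (∑ j, x j) • eu := hker _ hK
      have hxeq2 : x2 = (∑ j, x2 j) • eu := hker _ hK2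
      have hk' : x u = x2 u := hk
      apply Subtype.ext
      apply Subtype.ext
      show x = x2
      have e1 : x u = (∑ j, x j) * eu u := congrFun hxeq u
      have e2 : x2 u = (∑ j, x2 j) * eu u := congrFun hxeq2 u
      have heuu : eu u = 1 := by simp [heu]
      rw [hxeq, hxeq2]
      rw [heuu] at e1 e2
      rw [show (∑ j, x j) = x u by linarith, show (∑ j, x2 j) = x2 u by linarith, hk']
    have := LinearMap.finrank_le_finrank_of_injective hκinj
    simpa using this
  rw [hkerΦ'] at hrn
  omega

lemma DZ (A' : Matrix {x : V // x ≠ v} {x : V // x ≠ v} ℝ) (hA' : A' ∈ SG (deleteVert G v))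
    (u : {x : V // x ≠ v}) (hiso : ∀ z, ¬ (deleteVert G v).Adj u z) :
    ∃ A'' ∈ SG (deleteVert G v), (∀ j, A'' u j = 0) ∧ (∀ i j, i ≠ j → A'' i j = A' i j) ∧
      finrank ℝ (LinearMap.ker A'.mulVecLin) ≤ finrank ℝ (LinearMap.ker A''.mulVecLin) := by
  classical
  set A'' : Matrix {x : V // x ≠ v} {x : V // x ≠ v} ℝ :=
    Matrix.of (fun i j => if i = u ∧ j = u then 0 else A' i j) with hdef
  have hoff : ∀ i j, i ≠ j → A'' i j = A' i j := by
    intro i j hij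
    simp only [hdef, Matrix.of_apply, if_neg (fun h : i = u ∧ j = u => hij (h.1.trans h.2.symm))]
  have hrowu : ∀ j, A'' u j = 0 := by
    intro j
    by_cases hju : j = u
    · simp [hdef, hju]
    · rw [hoff u j (fun h => hju h.symm)]
      by_contra hne
      exact hiso j ((hA'.2 u j (fun h => hju h.symm)).mp hne)
  have hmem : A'' ∈ SG (deleteVert G v) := by
    constructor
    · ext i j
      show A'' j i = A'' i j
      by_cases hij : i = j
      · rw [hij]
      · rw [hoff _ _ (Ne.symm hij), hoff _ _ hij]
        exact congrFun (congrFun hA'.1 i) j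
    · intro i j hij
      rw [hoff _ _ hij]
      exact hA'.2 i j hij
  refine ⟨A'', hmem, hrowu, hoff, ?_⟩
  apply Submodule.finrank_mono
  intro x hx
  have hx' : A'.mulVec x = 0 := hx
  show A''.mulVec x = 0
  funext i
  by_cases hiu : i = u
  · subst hiu
    rw [_root_.mulVec_eq_sum]
    exact Finset.sum_eq_zero fun j _ => by rw [hrowu]; ring
  · have : ∀ j, A'' i j = A' i j := by
      intro j
      by_cases hij : i = j
      · simp only [hdef, Matrix.of_apply, if_neg (fun h : i = u ∧ j = u => hiu h.1)]
      · exact hoff i j hij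
    rw [_root_.mulVec_eq_sum]
    simp only [this]
    rw [← _root_.mulVec_eq_sum, hx']

end Kernels

section Facts
variable {V : Type*} [Fintype V] [DecidableEq V] (G : SimpleGraph V)

lemma SG_nonempty : ∃ A, A ∈ SG G := by
  classical
  refine ⟨Matrix.of (fun i j => if G.Adj i j then (1:ℝ) else 0), ?_, ?_⟩
  · ext i j
    simp only [Matrix.transpose_apply, Matrix.of_apply]
    rw [SimpleGraph.adj_comm]
  · intro i j _
    by_cases h : G.Adj i j <;> simp [h]

lemma maxNullity_bdd : BddAbove {k | ∃ A ∈ SG G, Fintype.card V - A.rank = k} :=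
  ⟨Fintype.card V, fun k ⟨A, _, hA⟩ => hA ▸ Nat.sub_le _ _⟩

lemma le_maxNullity (A : Matrix V V ℝ) (hA : A ∈ SG G) :
    Fintype.card V - A.rank ≤ maxNullity G :=
  le_csSup (maxNullity_bdd G) ⟨A, hA, rfl⟩

lemma maxNullity_spec : ∃ A ∈ SG G, Fintype.card V - A.rank = maxNullity G := by
  have h := Nat.sSup_mem (s := {k | ∃ A ∈ SG G, Fintype.card V - A.rank = k})
    (by obtain ⟨A, hA⟩ := SG_nonempty G; exact ⟨_, A, hA, rfl⟩) (maxNullity_bdd G)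
  exact h

lemma zfNum_le (B : Finset V) (hB : IsZeroForcingSet G ↑B) : zfNum G ≤ B.card :=
  Nat.sInf_le ⟨B, hB, rfl⟩

lemma zfNum_spec : ∃ B : Finset V, IsZeroForcingSet G ↑B ∧ B.card = zfNum G := by
  have h := Nat.sInf_mem (s := {k | ∃ B : Finset V, IsZeroForcingSet G ↑B ∧ B.card = k})
    ⟨_, Finset.univ, fun w => ZFClosed.init (by simp), rfl⟩
  exact h

end Facts

section MleZ
variable {V : Type*} [Fintype V] [DecidableEq V] (G : SimpleGraph V)

lemma nullity_le_card_of_zfs (A : Matrix V V ℝ) (hA : A ∈ SG G) (B : Finset V)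
    (hB : IsZeroForcingSet G ↑B) :
    finrank ℝ (LinearMap.ker A.mulVecLin) ≤ B.card := by
  by_contra hlt
  push_neg at hlt
  set K := LinearMap.ker A.mulVecLin with hK
  let π : K →ₗ[ℝ] (B → ℝ) := (LinearMap.funLeft ℝ ℝ (fun b : B => (b : V))).comp K.subtype
  have hker : LinearMap.ker π ≠ ⊥ := by
    intro h0
    have hinj : Function.Injective π := LinearMap.ker_eq_bot.mp h0
    have hle := LinearMap.finrank_le_finrank_of_injective hinj
    rw [Module.finrank_fintype_fun_eq_card, Fintype.card_coe] at hle
    omega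
  obtain ⟨x, hxker, hx0⟩ := (Submodule.ne_bot_iff _).mp hker
  have hAx : A.mulVec (x : V → ℝ) = 0 := x.2
  have hB0 : ∀ b ∈ B, (x : V → ℝ) b = 0 := by
    intro b hb
    have := congrFun (LinearMap.mem_ker.mp hxker) ⟨b, hb⟩
    simpa [π, LinearMap.funLeft] using this
  have hzero : ∀ w, ZFClosed G (↑B) w → (x : V → ℝ) w = 0 := by
    intro w hw
    induction hw with
    | init h => exact hB0 _ h
    | @force u t hu hadj huniq ih1 ih2 =>
      have hs : ∑ j, A u j * (x : V → ℝ) j = 0 := by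
        have := congrFun hAx u
        simpa [Matrix.mulVec, dotProduct] using this
      have hsum : ∑ j, A u j * (x : V → ℝ) j = A u t * (x : V → ℝ) t := by
        refine Finset.sum_eq_single t ?_ ?_
        · intro j _ hjt
          by_cases hju : j = u
          · subst hju; rw [ih1]; ring
          · by_cases hadj' : G.Adj u j
            · rw [ih2 j hadj' hjt]; ring
            · have : A u j = 0 := by
                by_contra hne
                exact hadj' ((hA.2 u j (Ne.symm hju)).mp hne)
              rw [this]; ring
        · intro ht; exact absurd (Finset.mem_univ t) ht
      have hAut : A u t ≠ 0 := (hA.2 u t (G.ne_of_adj hadj)).mpr hadj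
      have := hsum ▸ hs
      rcases mul_eq_zero.mp this with h | h
      · exact absurd h hAut
      · exact h
  apply hx0
  apply Subtype.ext
  funext w
  exact hzero w (hB w)

end MleZ

lemma exists_allnonzero {n : Type*} [Fintype n] [DecidableEq n]
    (W : Submodule ℝ (n → ℝ)) (s : Finset n)
    (h : ∀ i ∈ s, ∃ w ∈ W, w i ≠ 0) : ∃ w ∈ W, ∀ i ∈ s, w i ≠ 0 := by
  classical
  suffices haux : ∀ (m : ℕ) (w : n → ℝ), w ∈ W →
      (s.filter (fun i => w i = 0)).card ≤ m → ∃ w' ∈ W, ∀ i ∈ s, w' i ≠ 0 by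
    exact haux s.card 0 (zero_mem W) (by simpa using Finset.card_filter_le s _)
  intro m
  induction m with
  | zero =>
    intro w hw hcard
    refine ⟨w, hw, fun i hi => ?_⟩
    intro h0
    have : i ∈ s.filter (fun i => w i = 0) := Finset.mem_filter.mpr ⟨hi, h0⟩
    have := Finset.card_pos.mpr ⟨i, this⟩
    omega
  | succ m ih =>
    intro w hw hcard
    by_cases hz : (s.filter (fun i => w i = 0)).card = 0
    · exact ih w hw (by omega)
    · obtain ⟨j, hj⟩ := Finset.card_pos.mp (Nat.pos_of_ne_zero hz)
      obtain ⟨hjs, hj0⟩ := Finset.mem_filter.mp hj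
      obtain ⟨u, huW, hu0⟩ := h j hjs
      obtain ⟨ε, hε⟩ := Infinite.exists_notMem_finset
        ((s.image (fun i => -w i / u i)) ∪ {0})
      have hε0 : ε ≠ 0 := by
        intro h0; exact hε (by simp [h0])
      refine ih (w + ε • u) (W.add_mem hw (W.smul_mem ε huW)) ?_
      have hsub : s.filter (fun i => (w + ε • u) i = 0) ⊆
          (s.filter (fun i => w i = 0)).erase j := by
        intro i hi
        obtain ⟨his, hi0⟩ := Finset.mem_filter.mp hi
        simp only [Pi.add_apply, Pi.smul_apply, smul_eq_mul] at hi0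
        by_cases hwi : w i = 0
        · have hui : u i = 0 := by
            rw [hwi, zero_add] at hi0
            exact (mul_eq_zero.mp hi0).resolve_left hε0
          have hij : i ≠ j := by rintro rfl; exact hu0 hui
          exact Finset.mem_erase.mpr ⟨hij, Finset.mem_filter.mpr ⟨his, hwi⟩⟩
        · exfalso
          have hui : u i ≠ 0 := by
            intro h0; rw [h0, mul_zero, add_zero] at hi0; exact hwi hi0
          have : ε = -w i / u i := by field_simp; linarith
          exact hε (Finset.mem_union.mpr (Or.inl (Finset.mem_image.mpr ⟨i, his, this.symm⟩)))
      have := Finset.card_le_card hsub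
      have hjcard := Finset.card_erase_of_mem hj
      omega

lemma zfNum_le' {V : Type*} [Fintype V] (G : SimpleGraph V) (B : Finset V)
    (hB : IsZeroForcingSet G ↑B) : zfNum G ≤ B.card :=
  Nat.sInf_le ⟨B, hB, rfl⟩

lemma zfNum_spec' {V : Type*} [Fintype V] (G : SimpleGraph V) :
    ∃ B : Finset V, IsZeroForcingSet G ↑B ∧ B.card = zfNum G := by
  exact Nat.sInf_mem (s := {k | ∃ B : Finset V, IsZeroForcingSet G ↑B ∧ B.card = k})
    ⟨_, Finset.univ, fun w => ZFClosed.init (by simp), rfl⟩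

section ZSide
variable {V : Type*} [Fintype V] [DecidableEq V] (G : SimpleGraph V) (v : V)

lemma isolated_mem_zfs (B : Set {x : V // x ≠ v}) (hB : IsZeroForcingSet (deleteVert G v) B)
    (u : {x : V // x ≠ v}) (hu : ∀ z, ¬ (deleteVert G v).Adj u z) : u ∈ B := by
  cases hB u with
  | init h => exact h
  | force hx hadj huniq => exact absurd hadj.symm (hu _)

lemma transfer_closed (C : Set V) (B : Set {x : V // x ≠ v}) (S : Set {x : V // x ≠ v})
    (hS : ∀ s ∈ S, ∀ z, ¬ (deleteVert G v).Adj s z)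
    (hv : ZFClosed G C v)
    (hB : ∀ w ∈ B, w ∉ S → w.val ∈ C) :
    ∀ w, ZFClosed (deleteVert G v) B w → w ∉ S → ZFClosed G C w.val := by
  intro w hw
  induction hw with
  | init h => intro hwS; exact ZFClosed.init (hB _ h hwS)
  | @force x w hx hadj huniq ih1 ih2 =>
    intro _
    have hxS : x ∉ S := fun hxS => hS x hxS w hadj
    refine ZFClosed.force (ih1 hxS) hadj ?_
    intro z hz hzw
    by_cases hzv : z = v
    · exact hzv ▸ hv
    · have hadj' : (deleteVert G v).Adj x ⟨z, hzv⟩ := hz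
      have hzw' : (⟨z, hzv⟩ : {x : V // x ≠ v}) ≠ w := fun hc => hzw (congrArg Subtype.val hc)
      have hzS : (⟨z, hzv⟩ : {x : V // x ≠ v}) ∉ S := fun hc => hS _ hc x hadj'.symm
      exact ih2 _ hadj' hzw' hzS

lemma zfs_transfer (hdom : ∀ w, w ≠ v → G.Adj v w)
    (C : Set V) (B : Set {x : V // x ≠ v}) (hBzfs : IsZeroForcingSet (deleteVert G v) B)
    (S : Set {x : V // x ≠ v}) (hS : ∀ s ∈ S, ∀ z, ¬ (deleteVert G v).Adj s z)
    (hSsub : ∀ a ∈ S, ∀ b ∈ S, a = b)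
    (hv : ZFClosed G C v)
    (hB : ∀ w ∈ B, w ∉ S → w.val ∈ C) :
    IsZeroForcingSet G C := by
  have htr := transfer_closed G v C B S hS hv hB
  intro z
  by_cases hzv : z = v
  · exact hzv ▸ hv
  · by_cases hzS : (⟨z, hzv⟩ : {x : V // x ≠ v}) ∈ S
    · refine ZFClosed.force hv (hdom z hzv) ?_
      intro w hw hwz
      have hwv : w ≠ v := fun hc => G.loopless.irrefl v (hc ▸ hw)
      have hnS : (⟨w, hwv⟩ : {x : V // x ≠ v}) ∉ S := by
        intro hc
        exact hwz (congrArg Subtype.val (hSsub _ hc _ hzS))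
      exact htr _ (hBzfs _) hnS
    · exact htr _ (hBzfs _) hzS

lemma Z0 (hdom : ∀ w, w ≠ v → G.Adj v w) : zfNum G ≤ zfNum (deleteVert G v) + 1 := by
  obtain ⟨B, hB, hcard⟩ := zfNum_spec' (deleteVert G v)
  set C : Finset V := insert v (B.image Subtype.val) with hC
  have hzfs : IsZeroForcingSet G ↑C := by
    refine zfs_transfer G v hdom ↑C ↑B hB ∅ (by simp) (by simp) (ZFClosed.init (by simp [hC])) ?_
    intro w hw _
    simp only [hC, Finset.coe_insert, Set.mem_insert_iff, Finset.coe_image, Set.mem_image]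
    exact Or.inr ⟨w, hw, rfl⟩
  have hcC : C.card = B.card + 1 := by
    rw [hC, Finset.card_insert_of_notMem (by simp), Finset.card_image_of_injective _
      Subtype.val_injective]
  have := zfNum_le' G C hzfs
  omega

lemma Z1 (hdom : ∀ w, w ≠ v → G.Adj v w) (u : {x : V // x ≠ v})
    (hu : ∀ z, ¬ (deleteVert G v).Adj u z) : zfNum G ≤ zfNum (deleteVert G v) := by
  obtain ⟨B, hB, hcard⟩ := zfNum_spec' (deleteVert G v)
  have huB : u ∈ B := isolated_mem_zfs G v ↑B hB u hu
  set C : Finset V := insert v ((B.erase u).image Subtype.val) with hC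
  have hzfs : IsZeroForcingSet G ↑C := by
    refine zfs_transfer G v hdom ↑C ↑B hB {u} ?_ (by simp) (ZFClosed.init (by simp [hC])) ?_
    · intro s hs; rw [Set.mem_singleton_iff] at hs; exact hs ▸ hu
    · intro w hw hwS
      simp only [hC, Finset.coe_insert, Set.mem_insert_iff, Finset.coe_image, Set.mem_image]
      exact Or.inr ⟨w, Finset.mem_erase.mpr ⟨fun hc => hwS (hc ▸ rfl), hw⟩, rfl⟩
  have hcC : C.card = B.card := by
    rw [hC, Finset.card_insert_of_notMem (by simp), Finset.card_image_of_injective _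
      Subtype.val_injective, Finset.card_erase_of_mem huB]
    have : 1 ≤ B.card := Finset.card_pos.mpr ⟨u, huB⟩
    omega
  have := zfNum_le' G C hzfs
  omega

lemma Z2 (hdom : ∀ w, w ≠ v → G.Adj v w) (u₁ u₂ : {x : V // x ≠ v}) (hne : u₁ ≠ u₂)
    (hu₁ : ∀ z, ¬ (deleteVert G v).Adj u₁ z) (hu₂ : ∀ z, ¬ (deleteVert G v).Adj u₂ z) :
    zfNum G + 1 ≤ zfNum (deleteVert G v) := by
  obtain ⟨B, hB, hcard⟩ := zfNum_spec' (deleteVert G v)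
  have hu₁B : u₁ ∈ B := isolated_mem_zfs G v ↑B hB u₁ hu₁
  have hu₂B : u₂ ∈ B := isolated_mem_zfs G v ↑B hB u₂ hu₂
  set C : Finset V := (B.erase u₂).image Subtype.val with hC
  have hvC : ZFClosed G (↑C) v := by
    refine ZFClosed.force (u := u₁.val) (ZFClosed.init ?_) ((hdom u₁.val u₁.2).symm) ?_
    · simp only [hC, Finset.coe_image, Set.mem_image, Finset.mem_coe]
      exact ⟨u₁, Finset.mem_erase.mpr ⟨hne, hu₁B⟩, rfl⟩
    · intro w hw hwv
      exact absurd (show (deleteVert G v).Adj u₁ ⟨w, hwv⟩ from hw) (hu₁ _)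
  have hzfs : IsZeroForcingSet G ↑C := by
    refine zfs_transfer G v hdom ↑C ↑B hB {u₂} ?_ (by simp) hvC ?_
    · intro s hs; rw [Set.mem_singleton_iff] at hs; exact hs ▸ hu₂
    · intro w hw hwS
      simp only [hC, Finset.coe_image, Set.mem_image, Finset.mem_coe]
      exact ⟨w, Finset.mem_erase.mpr ⟨fun hc => hwS (hc ▸ rfl), hw⟩, rfl⟩
  have hcC : C.card = B.card - 1 := by
    rw [hC, Finset.card_image_of_injective _ Subtype.val_injective,
      Finset.card_erase_of_mem hu₂B]
  have h1 : 1 ≤ B.card := Finset.card_pos.mpr ⟨u₂, hu₂B⟩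
  have := zfNum_le' G C hzfs
  omega

end ZSide


section MSide
variable {V : Type*} [Fintype V] [DecidableEq V] (G : SimpleGraph V) (v : V)

lemma maxNullity_le_zfNum : maxNullity G ≤ zfNum G := by
  obtain ⟨A, hA, hAr⟩ := maxNullity_spec G
  obtain ⟨B, hB, hBr⟩ := zfNum_spec' G
  rw [← hAr, ← hBr, card_sub_rank]
  exact nullity_le_card_of_zfs G A hA B hB

lemma range_row_nonzero (A' : Matrix {x : V // x ≠ v} {x : V // x ≠ v} ℝ)
    (i j : {x : V // x ≠ v}) (hij : A' i j ≠ 0) :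
    ∃ w ∈ LinearMap.range A'.mulVecLin, w i ≠ 0 := by
  refine ⟨A'.mulVec (Pi.single j 1), ⟨Pi.single j 1, rfl⟩, ?_⟩
  rw [_root_.single_mulVec]
  exact hij

lemma M0 (hdom : ∀ w, w ≠ v → G.Adj v w)
    (hniso : ∀ u : {x : V // x ≠ v}, ∃ z, (deleteVert G v).Adj u z) :
    maxNullity (deleteVert G v) + 1 ≤ maxNullity G := by
  obtain ⟨A', hA', hr⟩ := maxNullity_spec (deleteVert G v)
  rw [card_sub_rank] at hr
  obtain ⟨w, hwmem, hw⟩ := exists_allnonzero (LinearMap.range A'.mulVecLin) Finset.univ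
    (fun i _ => by
      obtain ⟨z, hz⟩ := hniso i
      exact range_row_nonzero v A' i z ((hA'.2 i z ((deleteVert G v).ne_of_adj hz)).mpr hz))
  obtain ⟨y, hy⟩ := hwmem
  have hy' : A'.mulVec y = w := hy
  obtain ⟨A, hAmem, hAle⟩ := GL1 G v hdom A' hA' y
    (fun i => by rw [hy']; exact hw i (Finset.mem_univ i))
  have := le_maxNullity G A hAmem
  rw [card_sub_rank] at this
  omega

lemma M1 (hdom : ∀ w, w ≠ v → G.Adj v w) (u : {x : V // x ≠ v})
    (hu : ∀ z, ¬ (deleteVert G v).Adj u z)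
    (hniso : ∀ i : {x : V // x ≠ v}, i ≠ u → ∃ z, (deleteVert G v).Adj i z) :
    maxNullity (deleteVert G v) ≤ maxNullity G := by
  obtain ⟨A', hA', hr⟩ := maxNullity_spec (deleteVert G v)
  rw [card_sub_rank] at hr
  obtain ⟨A'', hA''mem, hrow, hoff, hge⟩ := DZ G v A' hA' u hu
  obtain ⟨w, hwmem, hw⟩ := exists_allnonzero (LinearMap.range A''.mulVecLin)
    (Finset.univ.erase u)
    (fun i hi => by
      obtain ⟨z, hz⟩ := hniso i (Finset.mem_erase.mp hi).1
      have hne : i ≠ z := (deleteVert G v).ne_of_adj hz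
      exact range_row_nonzero v A'' i z (by
        rw [hoff i z hne]
        exact (hA'.2 i z hne).mpr hz))
  obtain ⟨y, hy⟩ := hwmem
  have hy' : A''.mulVec y = w := hy
  obtain ⟨A, hAmem, hAle⟩ := GL2 G v hdom A'' hA''mem u hrow y
    (fun i hiu => by
      rw [hy']
      exact hw i (Finset.mem_erase.mpr ⟨hiu, Finset.mem_univ i⟩))
  have := le_maxNullity G A hAmem
  rw [card_sub_rank] at this
  omega

lemma M2 (hdom : ∀ w, w ≠ v → G.Adj v w) (u : {x : V // x ≠ v})
    (hu : ∀ z, ¬ (deleteVert G v).Adj u z) :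
    maxNullity (deleteVert G v) ≤ maxNullity G + 1 := by
  obtain ⟨A', hA', hr⟩ := maxNullity_spec (deleteVert G v)
  rw [card_sub_rank] at hr
  obtain ⟨A'', hA''mem, hrow, hoff, hge⟩ := DZ G v A' hA' u hu
  obtain ⟨A, hAmem, hAle⟩ := GL3 G v hdom A'' hA''mem u hrow
  have := le_maxNullity G A hAmem
  rw [card_sub_rank] at this
  omega

end MSide

/-- If `G` has a dominating vertex `v` and `M(G-v) = Z(G-v)`,
then `M(G) = Z(G)`. -/
theorem maxNullity_eq_zfNum_of_dominating {V : Type*} [Fintype V] [DecidableEq V]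
    (G : SimpleGraph V) (v : V) (hdom : ∀ w, w ≠ v → G.Adj v w)
    (h : maxNullity (deleteVert G v) = zfNum (deleteVert G v)) :
    maxNullity G = zfNum G := by
  by_cases h2 : ∃ u₁ u₂ : {x : V // x ≠ v}, u₁ ≠ u₂ ∧
      (∀ z, ¬ (deleteVert G v).Adj u₁ z) ∧ (∀ z, ¬ (deleteVert G v).Adj u₂ z)
  · obtain ⟨u₁, u₂, hne, hu₁, hu₂⟩ := h2
    have hm := M2 G v hdom u₁ hu₁
    have hz := Z2 G v hdom u₁ u₂ hne hu₁ hu₂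
    have hmz := maxNullity_le_zfNum G
    omega
  · by_cases h1 : ∃ u : {x : V // x ≠ v}, ∀ z, ¬ (deleteVert G v).Adj u z
    · obtain ⟨u, hu⟩ := h1
      have hniso : ∀ i : {x : V // x ≠ v}, i ≠ u → ∃ z, (deleteVert G v).Adj i z := by
        intro i hiu
        by_contra hno
        push_neg at hno
        exact h2 ⟨i, u, hiu, hno, hu⟩
      have hm := M1 G v hdom u hu hniso
      have hz := Z1 G v hdom u hu
      have hmz := maxNullity_le_zfNum G
      omega
    · push_neg at h1
      have hniso : ∀ u : {x : V // x ≠ v}, ∃ z, (deleteVert G v).Adj u z := by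
        intro u
        obtain ⟨z, hz⟩ := h1 u
        exact ⟨z, hz⟩
      have hm := M0 G v hdom hniso
      have hz := Z0 G v hdom
      have hmz := maxNullity_le_zfNum G
      omega
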